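/- Let a ∈ (0,1) and b > 0, and let (z_t) be an orbit of the scalar SAM map, z_{t+1} = a z_t − b·sign(z_t), whose iterates alternate strictly in sign (z_t z_{t+1} < 0 for all t). Then the amplitudes r_t = |z_t| satisfy r_{t+1} = b − a r_t for all t, and hence |z_t| converges to the exact two-cycle amplitude b/(1+a). -/

import Mathlib

/-- If an orbit of the scalar SAM map `z_{t+1} = a z_t - b sign z_t` alternates
strictly in sign, then its amplitudes satisfy `|z_{t+1}| = b - a |z_t|`, and
`|z_t|` converges to the exact two-cycle amplitude `b/(1+a)`. -/
theorem scalar_sam_alternating_two_cycle (a b : ℝ) (ha : a ∈ Set.Ioo (0:ℝ) 1) (hb : 0 < b)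
    (z : ℕ → ℝ) (hz : ∀ t, z (t + 1) = a * z t - b * Real.sign (z t))
    (halt : ∀ t, z t * z (t + 1) < 0) :
    (∀ t, |z (t + 1)| = b - a * |z t|) ∧
    Filter.Tendsto (fun t => |z t|) Filter.atTop (nhds (b / (1 + a))) := by
  obtain ⟨ha0, ha1⟩ := ha
  have hrec : ∀ t, |z (t + 1)| = b - a * |z t| := by
    intro t
    have hne := halt t
    rcases lt_trichotomy (z t) 0 with hlt | heq | hgt
    · have h1 : z (t + 1) = a * z t + b := by
        rw [hz t, Real.sign_of_neg hlt]; ring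
      have hpos : 0 < z (t + 1) := by
        by_contra h
        push_neg at h
        nlinarith [mul_pos_iff.mp (by nlinarith : 0 < z t * z (t+1))]
      rw [abs_of_pos hpos, abs_of_neg hlt, h1]; ring
    · simp [heq] at hne
    · have h1 : z (t + 1) = a * z t - b := by
        rw [hz t, Real.sign_of_pos hgt]; ring
      have hneg : z (t + 1) < 0 := by nlinarith
      rw [abs_of_neg hneg, abs_of_pos hgt, h1]; ring
  refine ⟨hrec, ?_⟩
  set L := b / (1 + a) with hL
  have h1a : (0:ℝ) < 1 + a := by linarith
  have hLdef : b - a * L = L := by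
    have hm : L * (1 + a) = b := by rw [hL]; field_simp
    linear_combination -hm
  have key : ∀ t, |z t| - L = (-a) ^ t * (|z 0| - L) := by
    intro t
    induction t with
    | zero => simp
    | succ n ih =>
      rw [hrec n, pow_succ]
      nlinarith [ih]
  have h0 : Filter.Tendsto (fun t => (-a) ^ t * (|z 0| - L)) Filter.atTop (nhds 0) := by
    have : Filter.Tendsto (fun t : ℕ => (-a) ^ t) Filter.atTop (nhds 0) := by
      apply tendsto_pow_atTop_nhds_zero_of_abs_lt_one
      rw [abs_neg, abs_of_pos ha0]; exact ha1
    simpa using this.mul_const _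
  have := Filter.Tendsto.add_const L (h0.congr (fun t => (key t).symm))
  simpa using this
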